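/- In L(ℓ₄², ℓ₄²), a rank one operator T with ‖T‖ = 1 is an extreme contraction if and only if its matrix with respect to the standard basis is of the form [[x₁, 0], [y₁, 0]] or [[0, x₁], [0, y₁]] with x₁y₁ ≠ 0 and x₁⁴ + y₁⁴ = 1. -/

import Mathlib

open Metric

/-- Birkhoff-James orthogonality: `x ⊥_B y` iff `‖x + t y‖ ≥ ‖x‖` for all real `t`. -/
def BJOrth {X : Type*} [NormedAddCommGroup X] [NormedSpace ℝ X] (x y : X) : Prop :=
  ∀ t : ℝ, ‖x‖ ≤ ‖x + t • y‖

/-- `(x, y)` is a compatible point pair with constant `(r, μ)`. -/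
def IsCPPConst {X Y : Type*} [NormedAddCommGroup X] [NormedSpace ℝ X]
    [NormedAddCommGroup Y] [NormedSpace ℝ Y] (x : X) (y : Y) (r μ : ℝ) : Prop :=
  ∀ z : X, ‖z‖ = 1 → BJOrth x z → ∀ w : Y, ‖w‖ = 1 → BJOrth y w →
    ∀ a b : ℝ, ‖a • x + b • z - x‖ ≤ r → ‖a • x + b • z‖ = 1 →
      ‖a • y + (b * μ) • w‖ ≤ 1

/-- `(x, y)` is a compatible point pair (CPP). -/
def IsCPP {X Y : Type*} [NormedAddCommGroup X] [NormedSpace ℝ X]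
    [NormedAddCommGroup Y] [NormedSpace ℝ Y] (x : X) (y : Y) : Prop :=
  ∃ r > 0, ∃ μ > 0, IsCPPConst x y r μ

/-- `(x, y)` is a weakly compatible point pair (weak CPP). -/
def IsWeakCPP {X Y : Type*} [NormedAddCommGroup X] [NormedSpace ℝ X]
    [NormedAddCommGroup Y] [NormedSpace ℝ Y] (x : X) (y : Y) : Prop :=
  ∃ z : X, ‖z‖ = 1 ∧ BJOrth x z ∧ ∃ w : Y, ‖w‖ = 1 ∧ BJOrth y w ∧
    ∃ r > 0, ∃ μ > 0, ∀ a b : ℝ, ‖a • x + b • z - x‖ ≤ r → ‖a • x + b • z‖ = 1 →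
      ‖a • y + (b * μ) • w‖ ≤ 1

/-- A normed space is smooth if every unit vector has a unique supporting functional. -/
def SmoothSp (X : Type*) [NormedAddCommGroup X] [NormedSpace ℝ X] : Prop :=
  ∀ x : X, ‖x‖ = 1 → ∃! f : X →L[ℝ] ℝ, ‖f‖ = 1 ∧ f x = 1

instance : Fact ((1:ENNReal) ≤ 4) := ⟨by norm_num⟩

noncomputable abbrev L4 := PiLp 4 (fun _ : Fin 2 => ℝ)

noncomputable def vec (a b : ℝ) : L4 := (WithLp.equiv 4 (Fin 2 → ℝ)).symm ![a, b]

lemma vec_apply0 (a b : ℝ) : vec a b 0 = a := rfl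
lemma vec_apply1 (a b : ℝ) : vec a b 1 = b := rfl

lemma rpow4 (x : ℝ) : |x| ^ ((4:ENNReal)).toReal = x ^ (4:ℕ) := by
  rw [show ((4:ENNReal)).toReal = ((4:ℕ):ℝ) by norm_num, Real.rpow_natCast, pow_abs,
    abs_of_nonneg (by positivity : (0:ℝ) ≤ x ^ (4:ℕ))]

lemma norm4 (v : L4) : ‖v‖ ^ (4:ℕ) = (v 0) ^ 4 + (v 1) ^ 4 := by
  have h : (0:ℝ) < (4:ENNReal).toReal := by norm_num
  rw [PiLp.norm_eq_sum h, Fin.sum_univ_two]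
  simp only [Real.norm_eq_abs, rpow4]
  have hnn : (0:ℝ) ≤ v 0 ^ (4:ℕ) + v 1 ^ (4:ℕ) := by positivity
  rw [← Real.rpow_natCast _ 4, ← Real.rpow_mul hnn]
  norm_num

lemma norm_le_norm4 {v w : L4} (h : (v 0)^4 + (v 1)^4 ≤ (w 0)^4 + (w 1)^4) : ‖v‖ ≤ ‖w‖ := by
  have h4 : ‖v‖ ^ (4:ℕ) ≤ ‖w‖ ^ (4:ℕ) := by rw [norm4, norm4]; exact h
  exact le_of_pow_le_pow_left₀ (n := 4) (by norm_num) (norm_nonneg w) h4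

lemma norm_eq_one4 {v : L4} (h : (v 0)^4 + (v 1)^4 = 1) : ‖v‖ = 1 := by
  have h4 : ‖v‖ ^ (4:ℕ) = 1 := by rw [norm4, h]
  have h1 : ‖v‖ ≤ 1 := le_of_pow_le_pow_left₀ (n := 4) (by norm_num) zero_le_one (by rw [h4, one_pow])
  have h2 : (1:ℝ) ≤ ‖v‖ := le_of_pow_le_pow_left₀ (n := 4) (by norm_num) (norm_nonneg v) (by rw [h4, one_pow])
  linarith

lemma pow4_le_of_norm_le {v w : L4} (h : ‖v‖ ≤ ‖w‖) : (v 0)^4 + (v 1)^4 ≤ (w 0)^4 + (w 1)^4 := by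
  rw [← norm4, ← norm4]; exact pow_le_pow_left₀ (norm_nonneg v) h 4

lemma L4_ext {v w : L4} (h0 : v 0 = w 0) (h1 : v 1 = w 1) : v = w := by
  ext i
  fin_cases i <;> assumption

lemma L4_eq_vec (v : L4) : v = vec (v 0) (v 1) := L4_ext rfl rfl

/-- the rank ≤ 1 operator x ↦ (a x₀ + b x₁) • y -/
noncomputable def rk1 (a b : ℝ) (y : L4) : L4 →L[ℝ] L4 :=
  LinearMap.toContinuousLinearMap
    { toFun := fun x => (a * x 0 + b * x 1) • y
      map_add' := by
        intro x z
        show (a * (x + z) 0 + b * (x + z) 1) • y = (a * x 0 + b * x 1) • y + (a * z 0 + b * z 1) • y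
        have h0 : (x + z) 0 = x 0 + z 0 := rfl
        have h1 : (x + z) 1 = x 1 + z 1 := rfl
        rw [h0, h1, ← add_smul]; congr 1; ring
      map_smul' := by
        intro c x
        show (a * (c • x) 0 + b * (c • x) 1) • y = c • ((a * x 0 + b * x 1) • y)
        have h0 : (c • x) 0 = c * x 0 := rfl
        have h1 : (c • x) 1 = c * x 1 := rfl
        rw [h0, h1, smul_smul]; congr 1; ring }

lemma rk1_apply (a b : ℝ) (y : L4) (x : L4) : rk1 a b y x = (a * x 0 + b * x 1) • y := rfl

lemma smul_apply' (c : ℝ) (v : L4) (i : Fin 2) : (c • v) i = c * v i := rfl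
lemma add_apply' (v w : L4) (i : Fin 2) : (v + w) i = v i + w i := rfl

noncomputable def E1 : L4 := vec 1 0
noncomputable def E2 : L4 := vec 0 1

lemma decompose (x : L4) : x = x 0 • E1 + x 1 • E2 := by
  apply L4_ext <;> simp [E1, E2, smul_apply', add_apply', vec_apply0, vec_apply1]

lemma clm_apply_eq (T : L4 →L[ℝ] L4) (x : L4) : T x = x 0 • T E1 + x 1 • T E2 := by
  conv_lhs => rw [decompose x]
  rw [map_add, map_smul, map_smul]

lemma clm_ext {A B : L4 →L[ℝ] L4} (h1 : A E1 = B E1) (h2 : A E2 = B E2) : A = B := by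
  ext x
  rw [clm_apply_eq A, clm_apply_eq B, h1, h2]

lemma op_norm_le_one (T : L4 →L[ℝ] L4) (h : ∀ x : L4, ‖T x‖ ≤ ‖x‖) : ‖T‖ ≤ 1 :=
  T.opNorm_le_bound zero_le_one (by simpa using h)

lemma not_extreme (T S : L4 →L[ℝ] L4) (hS : S ≠ 0) (h1 : ‖T + S‖ ≤ 1) (h2 : ‖T - S‖ ≤ 1) :
    T ∉ Set.extremePoints ℝ (closedBall (0 : L4 →L[ℝ] L4) 1) := by
  intro hext
  rw [mem_extremePoints] at hext
  have hmem1 : T + S ∈ closedBall (0 : L4 →L[ℝ] L4) 1 := by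
    rw [mem_closedBall_zero_iff]; exact h1
  have hmem2 : T - S ∈ closedBall (0 : L4 →L[ℝ] L4) 1 := by
    rw [mem_closedBall_zero_iff]; exact h2
  have hseg : T ∈ openSegment ℝ (T + S) (T - S) := by
    refine ⟨1/2, 1/2, by norm_num, by norm_num, by norm_num, ?_⟩
    module
  have := (hext.2 (T + S) hmem1 (T - S) hmem2 hseg).1
  apply hS
  have : S = (T + S) - T := by abel
  rw [this, (hext.2 (T + S) hmem1 (T - S) hmem2 hseg).1, sub_self]

-- bounds from p^4+q^4=1
lemma pq_bounds (p q : ℝ) (hpq : p^4 + q^4 = 1) :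
    p^2*q^2 ≤ 1/2 ∧ p^12 + q^12 ≤ 1 ∧ (p*q*(p^8 - q^8))^2 ≤ 1 := by
  have h1 : p^2*q^2 ≤ 1/2 := by nlinarith [sq_nonneg (p^2 - q^2), sq_nonneg p, sq_nonneg q]
  have hp : p^4 ≤ 1 := by nlinarith [sq_nonneg (q^2)]
  have hq : q^4 ≤ 1 := by nlinarith [sq_nonneg (p^2)]
  have hp0 : (0:ℝ) ≤ p^4 := by positivity
  have hq0 : (0:ℝ) ≤ q^4 := by positivity
  refine ⟨h1, ?_, ?_⟩
  · nlinarith [pow_le_pow_left₀ hp0 hp 2, pow_le_pow_left₀ hq0 hq 2, sq_nonneg (p^4), sq_nonneg (q^4)]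
  · have h2 : (p^4 - q^4)^2 ≤ 1 := by nlinarith
    have h3 : (p*q*(p^8-q^8))^2 = p^2*q^2*(p^4-q^4)^2*(p^4+q^4)^2 := by ring
    rw [h3, hpq]
    nlinarith [sq_nonneg (p^4-q^4), mul_nonneg (mul_nonneg (sq_nonneg p) (sq_nonneg q)) (sq_nonneg (p^4-q^4))]

-- main quadrature inequality (abstracted)
lemma inner_ineq (u e p q n4 : ℝ) (hpq : p^4 + q^4 = 1)
    (hS2 : (u^2 + 25*e^2)^2 ≤ n4) :
    (u*p - e*q^3)^4 + (u*q + e*p^3)^4 ≤ n4 := by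
  obtain ⟨b1, b2, b3⟩ := pq_bounds p q hpq
  have hexp : (u*p - e*q^3)^4 + (u*q + e*p^3)^4 =
      u^4*(p^4+q^4) + 6*(u^2*e^2)*(p^2*q^2)*(p^4+q^4) + 4*(u*e)*e^2*(p*q*(p^8-q^8))
        + e^4*(p^12+q^12) := by ring
  rw [hexp, hpq]
  have key : u^4*1 + 6*(u^2*e^2)*(p^2*q^2)*1 + 4*(u*e)*e^2*(p*q*(p^8-q^8)) + e^4*(p^12+q^12)
      ≤ (u^2 + 25*e^2)^2 := by
    have c1 : 6*(u^2*e^2)*(p^2*q^2)*1 ≤ 3*(u^2*e^2) := by nlinarith [sq_nonneg (u*e)]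
    have c2 : 4*(u*e)*e^2*(p*q*(p^8-q^8)) ≤ 2*(u^2*e^2) + 2*e^4 := by
      nlinarith [sq_nonneg (u*e - e^2*(p*q*(p^8-q^8))), sq_nonneg (e^2),
        mul_nonneg (sq_nonneg (e^2)) (sub_nonneg.mpr b3)]
    have c3 : e^4*(p^12+q^12) ≤ e^4 := by nlinarith [sq_nonneg (e^2)]
    nlinarith [sq_nonneg (u*e), sq_nonneg (e^2)]
  linarith

lemma keyA (α β p q x₁ x₂ ε : ℝ) (hs : α^4 + β^4 ≤ 1) (hpq : p^4 + q^4 = 1)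
    (hε : ε^2 = α^2*β^2/25) :
    ((α^3*x₁+β^3*x₂)*p - (ε*(β*x₁-α*x₂))*q^3)^4
      + ((α^3*x₁+β^3*x₂)*q + (ε*(β*x₁-α*x₂))*p^3)^4 ≤ x₁^4 + x₂^4 := by
  set u := α^3*x₁+β^3*x₂ with hu
  set e := ε*(β*x₁-α*x₂) with he
  apply inner_ineq u e p q _ hpq
  have hid : u^2 + 25*e^2 = (α^4+β^4)*(α^2*x₁^2+β^2*x₂^2) := by
    rw [hu, he]; linear_combination (25*(β*x₁-α*x₂)^2) * hε
  have hCS : (α^2*x₁^2+β^2*x₂^2)^2 ≤ (α^4+β^4)*(x₁^4+x₂^4) := by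
    nlinarith [sq_nonneg (α^2*x₂^2 - β^2*x₁^2)]
  have hs0 : (0:ℝ) ≤ α^4 + β^4 := by positivity
  have hA0 : (0:ℝ) ≤ α^2*x₁^2+β^2*x₂^2 := by positivity
  have hn0 : (0:ℝ) ≤ x₁^4 + x₂^4 := by positivity
  rw [hid]
  calc ((α^4+β^4)*(α^2*x₁^2+β^2*x₂^2))^2 = (α^4+β^4)^2*(α^2*x₁^2+β^2*x₂^2)^2 := by ring
    _ ≤ (α^4+β^4)^2*((α^4+β^4)*(x₁^4+x₂^4)) := by
        apply mul_le_mul_of_nonneg_left hCS (by positivity)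
    _ = (α^4+β^4)^3*(x₁^4+x₂^4) := by ring
    _ ≤ 1*(x₁^4+x₂^4) := by
        apply mul_le_mul_of_nonneg_right _ hn0
        nlinarith [sq_nonneg (α^4+β^4)]
    _ = x₁^4 + x₂^4 := one_mul _

lemma quart_strict (s r a c : ℝ) (hs : 0 < s) (hr : 0 < r) (hsr : s + r = 1) (hne : a ≠ c) :
    (s*a + r*c)^4 < s*a^4 + r*c^4 := by
  have hac : (0:ℝ) < (a - c)^2 := sq_pos_of_ne_zero (sub_ne_zero.mpr hne)
  have hG : (0:ℝ) < (a+c)^2 + (a+(s*a+r*c))^2 + (c+(s*a+r*c))^2 := by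
    rcases eq_or_ne (a + (s*a+r*c)) (0:ℝ) with h1 | h1
    · rcases eq_or_ne (c + (s*a+r*c)) (0:ℝ) with h2 | h2
      · exact absurd (by linarith) hne
      · nlinarith [sq_pos_of_ne_zero h2, sq_nonneg (a+c), sq_nonneg (a+(s*a+r*c))]
    · nlinarith [sq_pos_of_ne_zero h1, sq_nonneg (a+c), sq_nonneg (c+(s*a+r*c))]
  have hid : s*a^4 + r*c^4 - (s*a+r*c)^4
      = s*r*(a-c)^2 * (1/2*((a+c)^2 + (a+(s*a+r*c))^2 + (c+(s*a+r*c))^2)) := by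
    have : r = 1 - s := by linarith
    rw [this]; ring
  nlinarith [mul_pos (mul_pos (mul_pos hs hr) hac) hG]

lemma quart_eq (s r a c : ℝ) (hs : 0 < s) (hr : 0 < r) (hsr : s + r = 1)
    (h : (s*a + r*c)^4 = s*a^4 + r*c^4) : a = c := by
  by_contra hne
  exact absurd h (ne_of_lt (quart_strict s r a c hs hr hsr hne))

lemma quart_conv (s r a c : ℝ) (hs : 0 < s) (hr : 0 < r) (hsr : s + r = 1) :
    (s*a + r*c)^4 ≤ s*a^4 + r*c^4 := by
  rcases eq_or_ne a c with h | h
  · subst h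
    have h3 : s*a + r*a = a := by linear_combination a * hsr
    rw [h3]
    have h2 : a^4*s + a^4*r = a^4 := by linear_combination (a^4) * hsr
    linarith
  · exact (quart_strict s r a c hs hr hsr h).le

lemma c2_zero (x₁ y₁ v0 v1 : ℝ) (hx : x₁ ≠ 0) (hy : y₁ ≠ 0) (h1 : x₁^4 + y₁^4 = 1)
    (P : ∀ t : ℝ, (x₁ + t*v0)^4 + (y₁ + t*v1)^4 ≤ 1 + t^4) : v0 = 0 ∧ v1 = 0 := by
  set c₁ := 4*(x₁^3*v0 + y₁^3*v1) with hc₁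
  set c₂ := 6*(x₁^2*v0^2 + y₁^2*v1^2) with hc₂
  set c₃ := 4*(x₁*v0^3 + y₁*v1^3) with hc₃
  set c₄ := v0^4 + v1^4 - 1 with hc₄
  have hP' : ∀ t : ℝ, c₁*t + c₂*t^2 + c₃*t^3 + c₄*t^4 ≤ 0 := by
    intro t
    have h := P t
    rw [hc₁, hc₂, hc₃, hc₄]
    nlinarith [h]
  have heven : ∀ t : ℝ, c₂*t^2 + c₄*t^4 ≤ 0 := by
    intro t
    have h1 := hP' t
    have h2 := hP' (-t)
    nlinarith [h1, h2]
  have hc₂nonneg : 0 ≤ c₂ := by rw [hc₂]; positivity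
  have hc₂zero : c₂ = 0 := by
    by_contra hne
    have hpos : 0 < c₂ := lt_of_le_of_ne hc₂nonneg (Ne.symm hne)
    set t2 := c₂ / (2*(|c₄| + 1)) with ht2
    have habs : 0 ≤ |c₄| := abs_nonneg c₄
    have ht2pos : 0 < t2 := by rw [ht2]; positivity
    have hsq : (Real.sqrt t2)^2 = t2 := Real.sq_sqrt ht2pos.le
    have h := heven (Real.sqrt t2)
    rw [show (Real.sqrt t2)^4 = ((Real.sqrt t2)^2)^2 by ring, hsq] at h
    have hc4 : -|c₄| ≤ c₄ := neg_abs_le c₄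
    have ht2val : t2 * (2*(|c₄| + 1)) = c₂ := by
      rw [ht2]; field_simp
    nlinarith [h, mul_pos ht2pos ht2pos, sq_nonneg t2]
  constructor
  · by_contra h0
    have : x₁^2*v0^2 > 0 := by positivity
    nlinarith [sq_nonneg (y₁*v1)]
  · by_contra h0
    have : y₁^2*v1^2 > 0 := by positivity
    nlinarith [sq_nonneg (x₁*v0)]

lemma norm_E1 : ‖E1‖ = 1 := norm_eq_one4 (by norm_num [E1, vec_apply0, vec_apply1])
lemma norm_E2 : ‖E2‖ = 1 := norm_eq_one4 (by norm_num [E2, vec_apply0, vec_apply1])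

set_option maxHeartbeats 1000000 in
lemma extreme_helper (T : L4 →L[ℝ] L4) (hT : ‖T‖ = 1) (x₁ y₁ : ℝ)
    (hx : x₁ ≠ 0) (hy : y₁ ≠ 0) (h1 : x₁^4 + y₁^4 = 1)
    (e f : L4) (hne : ‖e‖ = 1)
    (hef : ∀ t : ℝ, ((e + t • f) 0)^4 + ((e + t • f) 1)^4 = 1 + t^4)
    (hext2 : ∀ A B : L4 →L[ℝ] L4, A e = B e → A f = B f → A = B)
    (hTe : T e = vec x₁ y₁) (hTf : T f = 0) :
    T ∈ Set.extremePoints ℝ (closedBall (0 : L4 →L[ℝ] L4) 1) := by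
  rw [mem_extremePoints]
  refine ⟨by rw [mem_closedBall_zero_iff]; exact hT.le, ?_⟩
  intro A hA B hB hseg
  obtain ⟨s, r, hs, hr, hsr, hconv⟩ := hseg
  rw [mem_closedBall_zero_iff] at hA hB
  have hAle : ∀ x : L4, ‖A x‖ ≤ ‖x‖ := fun x => by
    calc ‖A x‖ ≤ ‖A‖ * ‖x‖ := A.le_opNorm x
      _ ≤ 1 * ‖x‖ := mul_le_mul_of_nonneg_right hA (norm_nonneg x)
      _ = ‖x‖ := one_mul _
  have hBle : ∀ x : L4, ‖B x‖ ≤ ‖x‖ := fun x => by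
    calc ‖B x‖ ≤ ‖B‖ * ‖x‖ := B.le_opNorm x
      _ ≤ 1 * ‖x‖ := mul_le_mul_of_nonneg_right hB (norm_nonneg x)
      _ = ‖x‖ := one_mul _
  -- values at e
  have hconve : s • A e + r • B e = vec x₁ y₁ := by
    have : (s • A + r • B) e = T e := by rw [hconv]
    rw [ContinuousLinearMap.add_apply, ContinuousLinearMap.smul_apply,
      ContinuousLinearMap.smul_apply] at this
    rw [this, hTe]
  have hA4 : ((A e) 0)^4 + ((A e) 1)^4 ≤ 1 := by
    rw [← norm4]
    calc ‖A e‖^(4:ℕ) ≤ 1^(4:ℕ) := pow_le_pow_left₀ (norm_nonneg _) (hne ▸ hAle e) 4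
      _ = 1 := one_pow _
  have hB4 : ((B e) 0)^4 + ((B e) 1)^4 ≤ 1 := by
    rw [← norm4]
    calc ‖B e‖^(4:ℕ) ≤ 1^(4:ℕ) := pow_le_pow_left₀ (norm_nonneg _) (hne ▸ hBle e) 4
      _ = 1 := one_pow _
  have hcoord0 : s * (A e) 0 + r * (B e) 0 = x₁ := by
    have := congrArg (fun v : L4 => v 0) hconve
    simpa [add_apply', smul_apply', vec_apply0] using this
  have hcoord1 : s * (A e) 1 + r * (B e) 1 = y₁ := by
    have := congrArg (fun v : L4 => v 1) hconve
    simpa [add_apply', smul_apply', vec_apply1] using this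
  -- strict convexity forces A e = B e = vec x₁ y₁
  have hq0 := quart_conv s r ((A e) 0) ((B e) 0) hs hr hsr
  have hq1 := quart_conv s r ((A e) 1) ((B e) 1) hs hr hsr
  have hsum : (s * (A e) 0 + r * (B e) 0)^4 + (s * (A e) 1 + r * (B e) 1)^4 = 1 := by
    rw [hcoord0, hcoord1, h1]
  have heq0 : (s * (A e) 0 + r * (B e) 0)^4 = s * ((A e) 0)^4 + r * ((B e) 0)^4 := by
    nlinarith [hq0, hq1, hA4, hB4]
  have heq1 : (s * (A e) 1 + r * (B e) 1)^4 = s * ((A e) 1)^4 + r * ((B e) 1)^4 := by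
    nlinarith [hq0, hq1, hA4, hB4]
  have hae0 : (A e) 0 = (B e) 0 := quart_eq s r _ _ hs hr hsr heq0
  have hae1 : (A e) 1 = (B e) 1 := quart_eq s r _ _ hs hr hsr heq1
  have hAeBe : A e = B e := L4_ext hae0 hae1
  have hAee : A e = vec x₁ y₁ := by
    apply L4_ext
    · rw [vec_apply0, ← hcoord0, ← hae0]; linear_combination (-(A e 0)) * hsr
    · rw [vec_apply1, ← hcoord1, ← hae1]; linear_combination (-(A e 1)) * hsr
  have hBee : B e = vec x₁ y₁ := hAeBe ▸ hAee
  -- values at f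
  have hconvf : s • A f + r • B f = 0 := by
    have : (s • A + r • B) f = T f := by rw [hconv]
    rw [ContinuousLinearMap.add_apply, ContinuousLinearMap.smul_apply,
      ContinuousLinearMap.smul_apply] at this
    rw [this, hTf]
  have hAf : A f = 0 := by
    have hP : ∀ t : ℝ, (x₁ + t*((A f) 0))^4 + (y₁ + t*((A f) 1))^4 ≤ 1 + t^4 := by
      intro t
      have hle := pow4_le_of_norm_le (hAle (e + t • f))
      rw [hef t] at hle
      have hc0 : (A (e + t • f)) 0 = x₁ + t * ((A f) 0) := by
        rw [map_add, map_smul, add_apply', smul_apply', hAee, vec_apply0]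
      have hc1 : (A (e + t • f)) 1 = y₁ + t * ((A f) 1) := by
        rw [map_add, map_smul, add_apply', smul_apply', hAee, vec_apply1]
      rw [hc0, hc1] at hle
      exact hle
    obtain ⟨h0, h1'⟩ := c2_zero x₁ y₁ _ _ hx hy h1 hP
    exact L4_ext h0 h1'
  have hBf : B f = 0 := by
    rw [hAf, smul_zero, zero_add] at hconvf
    exact (smul_eq_zero_iff_right (ne_of_gt hr)).mp hconvf
  have hTee : T e = vec x₁ y₁ := hTe
  constructor
  · exact hext2 A T (by rw [hAee, hTee]) (by rw [hAf, hTf])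
  · exact hext2 B T (by rw [hBee, hTee]) (by rw [hBf, hTf])

lemma backward (T : L4 →L[ℝ] L4) (hT : ‖T‖ = 1) (x₁ y₁ : ℝ) (hxy : x₁ * y₁ ≠ 0)
    (h1 : x₁^4 + y₁^4 = 1)
    (hcase : (T E1 = vec x₁ y₁ ∧ T E2 = 0) ∨ (T E1 = 0 ∧ T E2 = vec x₁ y₁)) :
    T ∈ Set.extremePoints ℝ (closedBall (0 : L4 →L[ℝ] L4) 1) := by
  have hx : x₁ ≠ 0 := left_ne_zero_of_mul hxy
  have hy : y₁ ≠ 0 := right_ne_zero_of_mul hxy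
  rcases hcase with ⟨hTe, hTf⟩ | ⟨hTf, hTe⟩
  · apply extreme_helper T hT x₁ y₁ hx hy h1 E1 E2 norm_E1 _ _ hTe hTf
    · intro t
      have c0 : (E1 + t • E2) 0 = 1 := by
        rw [add_apply', smul_apply']; simp [E1, E2, vec_apply0]
      have c1 : (E1 + t • E2) 1 = t := by
        rw [add_apply', smul_apply']; simp [E1, E2, vec_apply1]
      rw [c0, c1]; ring
    · exact fun A B h h' => clm_ext h h'
  · apply extreme_helper T hT x₁ y₁ hx hy h1 E2 E1 norm_E2 _ _ hTe hTf
    · intro t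
      have c0 : (E2 + t • E1) 0 = t := by
        rw [add_apply', smul_apply']; simp [E1, E2, vec_apply0]
      have c1 : (E2 + t • E1) 1 = 1 := by
        rw [add_apply', smul_apply']; simp [E1, E2, vec_apply1]
      rw [c0, c1]; ring
    · exact fun A B h h' => clm_ext h' h

lemma cbrt_exists (a : ℝ) : ∃ α : ℝ, α^3 = a := by
  rcases le_or_gt 0 a with ha | ha
  · refine ⟨a ^ ((1:ℝ)/3), ?_⟩
    rw [← Real.rpow_natCast (a ^ ((1:ℝ)/3)) 3, ← Real.rpow_mul ha]
    norm_num
  · refine ⟨-((-a) ^ ((1:ℝ)/3)), ?_⟩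
    have hna : (0:ℝ) ≤ -a := by linarith
    rw [show (-((-a) ^ ((1:ℝ)/3)))^3 = -(((-a) ^ ((1:ℝ)/3))^3) by ring]
    rw [← Real.rpow_natCast ((-a) ^ ((1:ℝ)/3)) 3, ← Real.rpow_mul hna]
    norm_num

lemma abs_coord0_le (x : L4) : |x 0| ≤ ‖x‖ := by
  apply le_of_pow_le_pow_left₀ (n := 4) (by norm_num) (norm_nonneg x)
  rw [norm4, pow_abs, abs_of_nonneg (by positivity : (0:ℝ) ≤ (x 0)^4)]
  nlinarith [sq_nonneg ((x 1)^2)]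

lemma abs_coord1_le (x : L4) : |x 1| ≤ ‖x‖ := by
  apply le_of_pow_le_pow_left₀ (n := 4) (by norm_num) (norm_nonneg x)
  rw [norm4, pow_abs, abs_of_nonneg (by positivity : (0:ℝ) ≤ (x 1)^4)]
  nlinarith [sq_nonneg ((x 0)^2)]

lemma coords_add (F G : L4 →L[ℝ] L4) (x : L4) (i : Fin 2) :
    ((F + G) x) i = (F x) i + (G x) i := by
  rw [ContinuousLinearMap.add_apply, add_apply']

lemma coords_sub (F G : L4 →L[ℝ] L4) (x : L4) (i : Fin 2) :
    ((F - G) x) i = (F x) i - (G x) i := by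
  rw [ContinuousLinearMap.sub_apply]; rfl

lemma rk1_coord0 (a b u v : ℝ) (x : L4) :
    (rk1 a b (vec u v) x) 0 = (a * x 0 + b * x 1) * u := by
  rw [rk1_apply, smul_apply', vec_apply0]

lemma rk1_coord1 (a b u v : ℝ) (x : L4) :
    (rk1 a b (vec u v) x) 1 = (a * x 0 + b * x 1) * v := by
  rw [rk1_apply, smul_apply', vec_apply1]

lemma E1_0 : E1 0 = 1 := rfl
lemma E1_1 : E1 1 = 0 := rfl
lemma E2_0 : E2 0 = 0 := rfl
lemma E2_1 : E2 1 = 1 := rfl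


lemma caseB_key (c w X0 X1 : ℝ) (h : (c*w)^4 = 1) (hw : w^4 = 1) :
    (w*(X1/2))^4 + (c*w*X0)^4 ≤ X0^4 + X1^4 := by
  have e : (w*(X1/2))^4 + (c*w*X0)^4 = (1/16)*w^4*X1^4 + (c*w)^4*X0^4 := by ring
  rw [e, hw, h]
  have h0 : (0:ℝ) ≤ X0^4 := by positivity
  have h1 : (0:ℝ) ≤ X1^4 := by positivity
  linarith



set_option maxHeartbeats 1000000 in
lemma notExtreme_caseA (T : L4 →L[ℝ] L4) (a b p q : ℝ)
    (hTrk : T = rk1 a b (vec p q)) (hpq : p^4 + q^4 = 1)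
    (hbound : ∀ x : L4, ‖T x‖ ≤ ‖x‖) (ha0 : a ≠ 0) (hb0 : b ≠ 0) :
    T ∉ Set.extremePoints ℝ (closedBall (0 : L4 →L[ℝ] L4) 1) := by
  obtain ⟨α, hα⟩ := cbrt_exists a
  obtain ⟨β, hβ⟩ := cbrt_exists b
  have hα0 : α ≠ 0 := fun h => ha0 (by rw [← hα, h]; ring)
  have hβ0 : β ≠ 0 := fun h => hb0 (by rw [← hβ, h]; ring)
  have hs1 : α^4 + β^4 ≤ 1 := by
    have hb4 := pow4_le_of_norm_le (hbound (vec α β))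
    have hTv : T (vec α β) = (α^4+β^4) • (vec p q) := by
      rw [hTrk, rk1_apply, vec_apply0, vec_apply1, ← hα, ← hβ]
      congr 1
      try ring
    rw [hTv, smul_apply', smul_apply', vec_apply0, vec_apply1, vec_apply0, vec_apply1] at hb4
    have hs0 : 0 < α^4 + β^4 := by positivity
    have hb4' : (α^4+β^4)^4 ≤ α^4+β^4 := by
      calc (α^4+β^4)^4 = ((α^4+β^4)*p)^4 + ((α^4+β^4)*q)^4
            - (α^4+β^4)^4*(p^4+q^4) + (α^4+β^4)^4*1 - (α^4+β^4)^4 + (α^4+β^4)^4 := by ring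
        _ = ((α^4+β^4)*p)^4 + ((α^4+β^4)*q)^4
            - (α^4+β^4)^4*(p^4+q^4) + (α^4+β^4)^4*(p^4+q^4) - (α^4+β^4)^4 + (α^4+β^4)^4 := by
              rw [hpq]
        _ = ((α^4+β^4)*p)^4 + ((α^4+β^4)*q)^4 := by ring
        _ ≤ α^4+β^4 := hb4
    nlinarith [hb4', hs0, sq_nonneg (α^4+β^4-1), sq_nonneg (α^4+β^4+1), sq_nonneg (α^4+β^4)]
  set ε : ℝ := α*β/5 with hεdef
  have hε : ε^2 = α^2*β^2/25 := by rw [hεdef]; ring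
  have hε' : (-ε)^2 = α^2*β^2/25 := by rw [hεdef]; ring
  set S := rk1 (ε*β) (-(ε*α)) (vec (-q^3) (p^3)) with hSdef
  apply not_extreme T S
  · intro h0
    have h1' : S E1 = 0 := by rw [h0]; rfl
    rw [hSdef, rk1_apply, E1_0, E1_1] at h1'
    rw [show (ε*β*1 + -(ε*α)*0) = ε*β by ring] at h1'
    have hεβ : ε*β ≠ 0 := by
      apply mul_ne_zero _ hβ0
      rw [hεdef]
      exact div_ne_zero (mul_ne_zero hα0 hβ0) (by norm_num)
    have hw : vec (-q^3) (p^3) = (0:L4) := by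
      rcases smul_eq_zero.mp h1' with h | h
      · exact absurd h hεβ
      · exact h
    have hq3 : -q^3 = 0 := by
      have := congrArg (fun v : L4 => v 0) hw
      simpa [vec_apply0] using this
    have hp3 : p^3 = 0 := by
      have := congrArg (fun v : L4 => v 1) hw
      simpa [vec_apply1] using this
    have hp0 : p = 0 := pow_eq_zero_iff (by norm_num) |>.mp hp3
    have hq0 : q = 0 := by
      have : q^3 = 0 := by linarith [hq3]
      exact pow_eq_zero_iff (by norm_num) |>.mp this
    rw [hp0, hq0] at hpq
    norm_num at hpq
  · apply op_norm_le_one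
    intro x
    apply norm_le_norm4
    have hk := keyA α β p q (x 0) (x 1) ε hs1 hpq hε
    rw [coords_add, coords_add, hTrk, hSdef, rk1_coord0, rk1_coord1, rk1_coord0, rk1_coord1,
      ← hα, ← hβ]
    linarith [hk]
  · apply op_norm_le_one
    intro x
    apply norm_le_norm4
    have hk := keyA α β p q (x 0) (x 1) (-ε) hs1 hpq hε'
    rw [coords_sub, coords_sub, hTrk, hSdef, rk1_coord0, rk1_coord1, rk1_coord0, rk1_coord1,
      ← hα, ← hβ]
    linarith [hk]

set_option maxHeartbeats 1000000 in
lemma notExtreme_caseB1 (T : L4 →L[ℝ] L4) (a p q : ℝ)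
    (hTrk : T = rk1 a 0 (vec p q)) (hpq : p^4 + q^4 = 1)
    (ha4 : a^4 = 1) (hpq0 : p * q = 0) :
    T ∉ Set.extremePoints ℝ (closedBall (0 : L4 →L[ℝ] L4) 1) := by
  set S := rk1 0 (1/2) (vec q p) with hSdef
  apply not_extreme T S
  · intro h0
    have h1' : S E2 = 0 := by rw [h0]; rfl
    rw [hSdef, rk1_apply, E2_0, E2_1] at h1'
    rw [show ((0:ℝ)*0 + 1/2*1) = 1/2 by norm_num] at h1'
    have hw : vec q p = (0:L4) := by
      rcases smul_eq_zero.mp h1' with h | h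
      · norm_num at h
      · exact h
    have hq0 : q = 0 := by
      have := congrArg (fun v : L4 => v 0) hw; simpa [vec_apply0] using this
    have hp0 : p = 0 := by
      have := congrArg (fun v : L4 => v 1) hw; simpa [vec_apply1] using this
    rw [hp0, hq0] at hpq; norm_num at hpq
  · apply op_norm_le_one; intro x; apply norm_le_norm4
    rw [coords_add, coords_add, hTrk, hSdef, rk1_coord0, rk1_coord1, rk1_coord0, rk1_coord1]
    rcases mul_eq_zero.mp hpq0 with hp0 | hq0
    · rw [hp0] at hpq ⊢
      have hq4 : q^4 = 1 := by linarith [hpq]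
      have hcq : (a*q)^4 = 1 := by rw [mul_pow, ha4, hq4]; norm_num
      linarith [caseB_key a q (x 0) (x 1) hcq hq4]
    · rw [hq0] at hpq ⊢
      have hq4 : p^4 = 1 := by linarith [hpq]
      have hcq : (a*p)^4 = 1 := by rw [mul_pow, ha4, hq4]; norm_num
      linarith [caseB_key a p (x 0) (x 1) hcq hq4]
  · apply op_norm_le_one; intro x; apply norm_le_norm4
    rw [coords_sub, coords_sub, hTrk, hSdef, rk1_coord0, rk1_coord1, rk1_coord0, rk1_coord1]
    rcases mul_eq_zero.mp hpq0 with hp0 | hq0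
    · rw [hp0] at hpq ⊢
      have hq4 : q^4 = 1 := by linarith [hpq]
      have hcq : (a*q)^4 = 1 := by rw [mul_pow, ha4, hq4]; norm_num
      linarith [caseB_key a q (x 0) (-(x 1)) hcq hq4]
    · rw [hq0] at hpq ⊢
      have hq4 : p^4 = 1 := by linarith [hpq]
      have hcq : (a*p)^4 = 1 := by rw [mul_pow, ha4, hq4]; norm_num
      linarith [caseB_key a p (x 0) (-(x 1)) hcq hq4]

set_option maxHeartbeats 1000000 in
lemma notExtreme_caseB2 (T : L4 →L[ℝ] L4) (b p q : ℝ)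
    (hTrk : T = rk1 0 b (vec p q)) (hpq : p^4 + q^4 = 1)
    (ha4 : b^4 = 1) (hpq0 : p * q = 0) :
    T ∉ Set.extremePoints ℝ (closedBall (0 : L4 →L[ℝ] L4) 1) := by
  set S := rk1 (1/2) 0 (vec q p) with hSdef
  apply not_extreme T S
  · intro h0
    have h1' : S E1 = 0 := by rw [h0]; rfl
    rw [hSdef, rk1_apply, E1_0, E1_1] at h1'
    rw [show ((1:ℝ)/2*1 + 0*0) = 1/2 by norm_num] at h1'
    have hw : vec q p = (0:L4) := by
      rcases smul_eq_zero.mp h1' with h | h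
      · norm_num at h
      · exact h
    have hq0 : q = 0 := by
      have := congrArg (fun v : L4 => v 0) hw; simpa [vec_apply0] using this
    have hp0 : p = 0 := by
      have := congrArg (fun v : L4 => v 1) hw; simpa [vec_apply1] using this
    rw [hp0, hq0] at hpq; norm_num at hpq
  · apply op_norm_le_one; intro x; apply norm_le_norm4
    rw [coords_add, coords_add, hTrk, hSdef, rk1_coord0, rk1_coord1, rk1_coord0, rk1_coord1]
    rcases mul_eq_zero.mp hpq0 with hp0 | hq0
    · rw [hp0] at hpq ⊢
      have hq4 : q^4 = 1 := by linarith [hpq]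
      have hcq : (b*q)^4 = 1 := by rw [mul_pow, ha4, hq4]; norm_num
      linarith [caseB_key b q (x 1) (x 0) hcq hq4]
    · rw [hq0] at hpq ⊢
      have hq4 : p^4 = 1 := by linarith [hpq]
      have hcq : (b*p)^4 = 1 := by rw [mul_pow, ha4, hq4]; norm_num
      linarith [caseB_key b p (x 1) (x 0) hcq hq4]
  · apply op_norm_le_one; intro x; apply norm_le_norm4
    rw [coords_sub, coords_sub, hTrk, hSdef, rk1_coord0, rk1_coord1, rk1_coord0, rk1_coord1]
    rcases mul_eq_zero.mp hpq0 with hp0 | hq0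
    · rw [hp0] at hpq ⊢
      have hq4 : q^4 = 1 := by linarith [hpq]
      have hcq : (b*q)^4 = 1 := by rw [mul_pow, ha4, hq4]; norm_num
      linarith [caseB_key b q (x 1) (-(x 0)) hcq hq4]
    · rw [hq0] at hpq ⊢
      have hq4 : p^4 = 1 := by linarith [hpq]
      have hcq : (b*p)^4 = 1 := by rw [mul_pow, ha4, hq4]; norm_num
      linarith [caseB_key b p (x 1) (-(x 0)) hcq hq4]

set_option maxHeartbeats 4000000 in
lemma forward (T : L4 →L[ℝ] L4)
    (hrank : Module.rank ℝ (LinearMap.range (T : L4 →ₗ[ℝ] L4)) = 1)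
    (hT : ‖T‖ = 1)
    (hform : ¬ ∃ x₁ y₁ : ℝ, x₁ * y₁ ≠ 0 ∧ x₁ ^ 4 + y₁ ^ 4 = 1 ∧
      ((T E1 = vec x₁ y₁ ∧ T E2 = 0) ∨ (T E1 = 0 ∧ T E2 = vec x₁ y₁))) :
    T ∉ Set.extremePoints ℝ (closedBall (0 : L4 →L[ℝ] L4) 1) := by
  classical
  obtain ⟨v₀, hv₀ne, hv₀⟩ := rank_eq_one_iff.mp hrank
  have hy₀ : (v₀ : L4) ≠ 0 := fun h => hv₀ne (Subtype.ext h)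
  have hmem1 : T E1 ∈ LinearMap.range (T : L4 →ₗ[ℝ] L4) := ⟨E1, rfl⟩
  have hmem2 : T E2 ∈ LinearMap.range (T : L4 →ₗ[ℝ] L4) := ⟨E2, rfl⟩
  obtain ⟨a₀, ha₀⟩ := hv₀ ⟨T E1, hmem1⟩
  obtain ⟨b₀, hb₀⟩ := hv₀ ⟨T E2, hmem2⟩
  have hTE1 : T E1 = a₀ • (v₀ : L4) := by
    have := congrArg (fun z : LinearMap.range (T : L4 →ₗ[ℝ] L4) => (z : L4)) ha₀
    exact this.symm
  have hTE2 : T E2 = b₀ • (v₀ : L4) := by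
    have := congrArg (fun z : LinearMap.range (T : L4 →ₗ[ℝ] L4) => (z : L4)) hb₀
    exact this.symm
  have hn : 0 < ‖(v₀ : L4)‖ := norm_pos_iff.mpr hy₀
  set y : L4 := ‖(v₀ : L4)‖⁻¹ • (v₀ : L4) with hydef
  have hny : ‖y‖ = 1 := by
    rw [hydef, norm_smul, norm_inv, norm_norm, inv_mul_cancel₀ (ne_of_gt hn)]
  set a : ℝ := a₀ * ‖(v₀ : L4)‖ with hadef
  set b : ℝ := b₀ * ‖(v₀ : L4)‖ with hbdef
  have hay : T E1 = a • y := by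
    rw [hTE1, hydef, hadef, smul_smul, mul_assoc, mul_inv_cancel₀ (ne_of_gt hn), mul_one]
  have hby : T E2 = b • y := by
    rw [hTE2, hydef, hbdef, smul_smul, mul_assoc, mul_inv_cancel₀ (ne_of_gt hn), mul_one]
  set p : ℝ := y 0 with hpdef
  set q : ℝ := y 1 with hqdef
  have hpq : p^4 + q^4 = 1 := by
    rw [hpdef, hqdef, ← norm4, hny, one_pow]
  have hyvec : y = vec p q := L4_eq_vec y
  have hTrk : T = rk1 a b (vec p q) := by
    apply clm_ext
    · rw [rk1_apply, hay, hyvec]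
      norm_num [E1, vec_apply0, vec_apply1]
    · rw [rk1_apply, hby, hyvec]
      norm_num [E2, vec_apply0, vec_apply1]
  have hbound : ∀ x : L4, ‖T x‖ ≤ ‖x‖ := fun x => by
    calc ‖T x‖ ≤ ‖T‖ * ‖x‖ := T.le_opNorm x
      _ = ‖x‖ := by rw [hT, one_mul]
  have hab : ¬(a = 0 ∧ b = 0) := by
    rintro ⟨ha, hb⟩
    have : T = 0 := by
      apply clm_ext
      · rw [hay, ha, zero_smul]; rfl
      · rw [hby, hb, zero_smul]; rfl
    rw [this, norm_zero] at hT
    norm_num at hT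
  have hn1 : ‖vec p q‖ = 1 := by rw [← hyvec]; exact hny
  rcases eq_or_ne a 0 with ha0 | ha0
  · -- a = 0, b ≠ 0
    have hb0 : b ≠ 0 := fun hb => hab ⟨ha0, hb⟩
    have haabs : |b| ≤ 1 := by
      have h := hbound E2
      rw [hby, norm_smul, hny, mul_one, Real.norm_eq_abs, norm_E2] at h
      exact h
    have h1a : 1 ≤ |b| := by
      have hop : ‖T‖ ≤ |b| := by
        apply T.opNorm_le_bound (abs_nonneg b)
        intro x
        rw [hTrk, rk1_apply, ha0, norm_smul, hn1, mul_one, Real.norm_eq_abs]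
        rw [show (0:ℝ) * x 0 + b * x 1 = b * x 1 by ring, abs_mul]
        exact mul_le_mul_of_nonneg_left (abs_coord1_le x) (abs_nonneg b)
      rw [hT] at hop; exact hop
    have habs1 : |b| = 1 := le_antisymm haabs h1a
    have hb4 : b^4 = 1 := by
      have h2 : b^2 = 1 := by nlinarith [sq_abs b]
      nlinarith [h2]
    have hpq0 : p * q = 0 := by
      by_contra hne
      apply hform
      refine ⟨b*p, b*q, ?_, by nlinarith [hpq, hb4, sq_nonneg (p^2), sq_nonneg (q^2)],
        Or.inr ⟨?_, ?_⟩⟩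
      · rw [show b*p*(b*q) = (b*b)*(p*q) by ring]
        exact mul_ne_zero (mul_ne_zero hb0 hb0) hne
      · rw [hay, ha0, zero_smul]
      · rw [hby, hyvec]
        apply L4_ext
        · rw [smul_apply', vec_apply0, vec_apply0]
        · rw [smul_apply', vec_apply1, vec_apply1]
    rw [ha0] at hTrk
    exact notExtreme_caseB2 T b p q hTrk hpq hb4 hpq0
  · rcases eq_or_ne b 0 with hb0 | hb0
    · -- b = 0, a ≠ 0
      have haabs : |a| ≤ 1 := by
        have h := hbound E1
        rw [hay, norm_smul, hny, mul_one, Real.norm_eq_abs, norm_E1] at h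
        exact h
      have h1a : 1 ≤ |a| := by
        have hop : ‖T‖ ≤ |a| := by
          apply T.opNorm_le_bound (abs_nonneg a)
          intro x
          rw [hTrk, rk1_apply, hb0, norm_smul, hn1, mul_one, Real.norm_eq_abs]
          rw [show a * x 0 + 0 * x 1 = a * x 0 by ring, abs_mul]
          exact mul_le_mul_of_nonneg_left (abs_coord0_le x) (abs_nonneg a)
        rw [hT] at hop; exact hop
      have habs1 : |a| = 1 := le_antisymm haabs h1a
      have ha4 : a^4 = 1 := by
        have h2 : a^2 = 1 := by nlinarith [sq_abs a]
        nlinarith [h2]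
      have hpq0 : p * q = 0 := by
        by_contra hne
        apply hform
        refine ⟨a*p, a*q, ?_, by nlinarith [hpq, ha4, sq_nonneg (p^2), sq_nonneg (q^2)],
          Or.inl ⟨?_, ?_⟩⟩
        · rw [show a*p*(a*q) = (a*a)*(p*q) by ring]
          exact mul_ne_zero (mul_ne_zero ha0 ha0) hne
        · rw [hay, hyvec]
          apply L4_ext
          · rw [smul_apply', vec_apply0, vec_apply0]
          · rw [smul_apply', vec_apply1, vec_apply1]
        · rw [hby, hb0, zero_smul]
      rw [hb0] at hTrk
      exact notExtreme_caseB1 T a p q hTrk hpq ha4 hpq0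
    · exact notExtreme_caseA T a b p q hTrk hpq hbound ha0 hb0

theorem stmt10 (T : L4 →L[ℝ] L4)
    (hrank : Module.rank ℝ (LinearMap.range (T : L4 →ₗ[ℝ] L4)) = 1)
    (hT : ‖T‖ = 1) :
    T ∈ Set.extremePoints ℝ (closedBall (0 : L4 →L[ℝ] L4) 1) ↔
      ∃ x₁ y₁ : ℝ, x₁ * y₁ ≠ 0 ∧ x₁ ^ 4 + y₁ ^ 4 = 1 ∧
        ((T ((WithLp.equiv 4 (Fin 2 → ℝ)).symm ![1, 0]) =
            (WithLp.equiv 4 (Fin 2 → ℝ)).symm ![x₁, y₁] ∧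
          T ((WithLp.equiv 4 (Fin 2 → ℝ)).symm ![0, 1]) = 0) ∨
         (T ((WithLp.equiv 4 (Fin 2 → ℝ)).symm ![1, 0]) = 0 ∧
          T ((WithLp.equiv 4 (Fin 2 → ℝ)).symm ![0, 1]) =
            (WithLp.equiv 4 (Fin 2 → ℝ)).symm ![x₁, y₁])) := by
  constructor
  · intro hext
    by_contra hform
    exact forward T hrank hT hform hext
  · rintro ⟨x₁, y₁, hxy, h1, hcase⟩
    exact backward T hT x₁ y₁ hxy h1 hcase
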